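/- Generalized g-leakage representation of Arimoto mutual information: let X and Y be finite nonempty sets, let α ∈ (0,1) ∪ (1,∞), and let p be a probability distribution on X × Y with marginal p_X(x) = ∑_y p(x,y), where p_X is strictly positive. Then (1/(1−α)) · log ∑_x p_X(x)^α − (α/(1−α)) · log ∑_y (∑_x p(x,y)^α)^{1/α} = log( sup over strictly positive families r_{X|Y} of (∑_{x,y} p(x,y) · r(x|y)^{(α−1)/α})^{α/(α−1)} ) − log( sup over strictly positive probability distributions r₀ on X of (∑_x p_X(x) · r₀(x)^{(α−1)/α})^{α/(α−1)} ); that is, the Arimoto mutual information I_α^A(X;Y) = H_α(X) − H_α^A(X|Y) equals the generalized multiplicative g-leakage log(V_cond/V_prior) for the Kolmogorov–Nagumo function ln_{1/α} and the soft 0-1 score. -/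

import Mathlib

open Real BigOperators Finset

/-- Concave Jensen for `rpow` with exponent in `(0,1]`. -/
lemma jensen_concave_rpow {ι : Type*} (s : Finset ι) (w z : ι → ℝ)
    (hw : ∀ i ∈ s, 0 ≤ w i) (hw' : ∑ i ∈ s, w i = 1) (hz : ∀ i ∈ s, 0 ≤ z i)
    {t : ℝ} (ht0 : 0 < t) (ht1 : t ≤ 1) :
    ∑ i ∈ s, w i * z i ^ t ≤ (∑ i ∈ s, w i * z i) ^ t := by
  have hp : (1:ℝ) ≤ 1 / t := by rw [le_div_iff₀ ht0]; linarith
  have h := Real.arith_mean_le_rpow_mean s w (fun i => z i ^ t) hw hw'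
    (fun i hi => Real.rpow_nonneg (hz i hi) t) hp
  have he : ∀ i ∈ s, w i * (z i ^ t) ^ (1 / t) = w i * z i := by
    intro i hi
    rw [← Real.rpow_mul (hz i hi), mul_one_div_cancel ht0.ne', Real.rpow_one]
  rw [Finset.sum_congr rfl he, one_div_one_div] at h
  exact h

lemma core_gt {ι : Type*} [Fintype ι] {α : ℝ} (hα : 1 < α) (q r : ι → ℝ)
    (hq : ∀ i, 0 ≤ q i) (hr : ∀ i, 0 < r i) (hr1 : ∑ i, r i = 1) :
    ∑ i, q i * r i ^ ((α - 1) / α) ≤ (∑ i, q i ^ α) ^ (1 / α) := by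
  have hα0 : 0 < α := lt_trans one_pos hα
  have h := jensen_concave_rpow Finset.univ r (fun i => q i ^ α / r i)
    (fun i _ => (hr i).le) hr1
    (fun i _ => div_nonneg (Real.rpow_nonneg (hq i) α) (hr i).le)
    (t := 1 / α) (by positivity) (by rw [div_le_one hα0]; linarith)
  have h1 : ∀ i ∈ Finset.univ, r i * (q i ^ α / r i) ^ (1 / α)
      = q i * r i ^ ((α - 1) / α) := by
    intro i _
    rcases eq_or_lt_of_le (hq i) with h0 | h0
    · rw [← h0, Real.zero_rpow hα0.ne', zero_div,
        Real.zero_rpow (by positivity : (1:ℝ)/α ≠ 0), mul_zero, zero_mul]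
    · have hrp := Real.rpow_pos_of_pos (hr i) (1 / α)
      have hsplit : r i ^ ((α - 1) / α) = r i / r i ^ (1 / α) := by
        rw [eq_div_iff hrp.ne', ← Real.rpow_add (hr i), ← add_div,
          sub_add_cancel, div_self hα0.ne', Real.rpow_one]
      rw [Real.div_rpow (Real.rpow_nonneg (hq i) α) (hr i).le,
        ← Real.rpow_mul (hq i), mul_one_div_cancel hα0.ne', Real.rpow_one, hsplit]
      ring
  rw [Finset.sum_congr rfl h1] at h
  have h2 : ∀ i ∈ Finset.univ, r i * (q i ^ α / r i) = q i ^ α := by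
    intro i _; rw [mul_comm, div_mul_cancel₀ _ (hr i).ne']
  rwa [Finset.sum_congr rfl h2] at h

lemma core_lt {ι : Type*} [Fintype ι] {α : ℝ} (hα0 : 0 < α) (hα : α < 1) (q r : ι → ℝ)
    (hq : ∀ i, 0 ≤ q i) (hr : ∀ i, 0 < r i) (hr1 : ∑ i, r i = 1) :
    (∑ i, q i ^ α) ^ (1 / α) ≤ ∑ i, q i * r i ^ ((α - 1) / α) := by
  have hA : (0:ℝ) ≤ ∑ i, q i * r i ^ ((α - 1) / α) :=
    Finset.sum_nonneg fun i _ =>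
      mul_nonneg (hq i) (Real.rpow_nonneg (hr i).le _)
  have h := jensen_concave_rpow Finset.univ r (fun i => q i * r i ^ (-(1 / α)))
    (fun i _ => (hr i).le) hr1
    (fun i _ => mul_nonneg (hq i) (Real.rpow_nonneg (hr i).le _))
    (t := α) hα0 hα.le
  have h1 : ∀ i ∈ Finset.univ, r i * (q i * r i ^ (-(1 / α))) ^ α = q i ^ α := by
    intro i _
    rw [Real.mul_rpow (hq i) (Real.rpow_nonneg (hr i).le _),
      ← Real.rpow_mul (hr i).le]
    have : -(1 / α) * α = -1 := by field_simp
    rw [this, Real.rpow_neg_one]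
    field_simp
    rw [mul_comm, mul_div_assoc, div_self (hr i).ne', mul_one]
  have h2 : ∀ i ∈ Finset.univ, r i * (q i * r i ^ (-(1 / α)))
      = q i * r i ^ ((α - 1) / α) := by
    intro i _
    have : r i * r i ^ (-(1 / α)) = r i ^ ((α - 1) / α) := by
      nth_rewrite 1 [← Real.rpow_one (r i)]
      rw [← Real.rpow_add (hr i)]
      congr 1
      field_simp
      ring
    calc r i * (q i * r i ^ (-(1 / α))) = q i * (r i * r i ^ (-(1 / α))) := by ring
    _ = q i * r i ^ ((α - 1) / α) := by rw [this]
  rw [Finset.sum_congr rfl h1, Finset.sum_congr rfl h2] at h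
  have h3 : (∑ i, q i ^ α) ^ (1/α)
      ≤ ((∑ i, q i * r i ^ ((α - 1) / α)) ^ α) ^ (1/α) :=
    Real.rpow_le_rpow (Finset.sum_nonneg fun i _ => Real.rpow_nonneg (hq i) α) h
      (by positivity)
  rwa [← Real.rpow_mul hA, mul_one_div_cancel hα0.ne', Real.rpow_one] at h3

lemma opt_value {ι : Type*} [Fintype ι] {α : ℝ} (hα0 : 0 < α) (q : ι → ℝ)
    (hq : ∀ i, 0 ≤ q i) :
    ∑ i, q i * (q i ^ α / (∑ j, q j ^ α)) ^ ((α - 1) / α)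
      = (∑ j, q j ^ α) ^ (1 / α) := by
  have hS0 : 0 ≤ ∑ j, q j ^ α := Finset.sum_nonneg fun j _ => Real.rpow_nonneg (hq j) α
  rcases eq_or_lt_of_le hS0 with h0 | h0
  · have hqz : ∀ j, q j = 0 := by
      intro j
      by_contra hne
      have hj : 0 < q j := lt_of_le_of_ne (hq j) (Ne.symm hne)
      have := (Finset.sum_eq_zero_iff_of_nonneg
        (fun j _ => Real.rpow_nonneg (hq j) α)).1 h0.symm j (Finset.mem_univ j)
      exact absurd this (ne_of_gt (Real.rpow_pos_of_pos hj α))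
    rw [← h0, Real.zero_rpow (by positivity : (1:ℝ)/α ≠ 0)]
    exact Finset.sum_eq_zero fun i _ => by rw [hqz i, zero_mul]
  · have key : ∀ i ∈ Finset.univ, q i * (q i ^ α / (∑ j, q j ^ α)) ^ ((α - 1) / α)
        = q i ^ α / (∑ j, q j ^ α) ^ ((α - 1) / α) := by
      intro i _
      rcases eq_or_lt_of_le (hq i) with hi | hi
      · rw [← hi, Real.zero_rpow hα0.ne', zero_div, zero_mul, zero_div]
      · rw [Real.div_rpow (Real.rpow_nonneg (hq i) α) hS0, ← Real.rpow_mul (hq i)]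
        have hss : α * ((α - 1) / α) = α - 1 := by field_simp
        rw [hss, ← mul_div_assoc]
        congr 1
        nth_rewrite 1 [← Real.rpow_one (q i)]
        rw [← Real.rpow_add hi]
        congr 1
        ring
    rw [Finset.sum_congr rfl key, ← Finset.sum_div]
    rw [show (1:ℝ)/α = 1 - (α - 1)/α by field_simp; ring,
      Real.rpow_sub h0, Real.rpow_one]

/-- Generalized g-leakage representation of Arimoto mutual information:
`I_α^A(X;Y) = H_α(X) − H_α^A(X|Y)` equals `log(V_cond/V_prior)` for the KN function
`ln_{1/α}` and the soft 0-1 score. -/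
theorem arimoto_mi_eq_generalized_leakage
    {X Y : Type*} [Fintype X] [Fintype Y] [Nonempty X] [Nonempty Y]
    (α : ℝ) (hα0 : 0 < α) (hα1 : α ≠ 1)
    (p : X × Y → ℝ) (hp : ∀ z, 0 ≤ p z) (hp1 : (∑ z, p z) = 1)
    (pX : X → ℝ) (hpX : ∀ x, pX x = ∑ y, p (x, y)) (hpXpos : ∀ x, 0 < pX x) :
    (1 / (1 - α)) * Real.log (∑ x, pX x ^ α)
      - (α / (1 - α)) * Real.log (∑ y, (∑ x, p (x, y) ^ α) ^ (1 / α))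
    = Real.log (sSup {v : ℝ | ∃ r : Y → X → ℝ,
          (∀ y x, 0 < r y x) ∧ (∀ y, (∑ x, r y x) = 1) ∧
          v = (∑ z : X × Y, p z * r z.2 z.1 ^ ((α - 1) / α)) ^ (α / (α - 1))})
      - Real.log (sSup {v : ℝ | ∃ r₀ : X → ℝ,
          (∀ x, 0 < r₀ x) ∧ (∑ x, r₀ x) = 1 ∧
          v = (∑ x, pX x * r₀ x ^ ((α - 1) / α)) ^ (α / (α - 1))}) := by
  have hαne : α - 1 ≠ 0 := sub_ne_zero.2 hα1
  -- there is a point of positive probability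
  obtain ⟨z₀, hz₀⟩ : ∃ z : X × Y, 0 < p z := by
    obtain ⟨x₀⟩ := (inferInstance : Nonempty X)
    have h := hpXpos x₀
    rw [hpX] at h
    by_contra hcon
    push_neg at hcon
    have : ∑ y, p (x₀, y) ≤ 0 := Finset.sum_nonpos fun y _ => hcon (x₀, y)
    linarith
  set S : Y → ℝ := fun y => ∑ x, p (x, y) ^ α with hSdef
  have hSnn : ∀ y, 0 ≤ S y := fun y =>
    Finset.sum_nonneg fun x _ => Real.rpow_nonneg (hp (x, y)) α
  have hSz : 0 < S z₀.2 := by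
    have h1 : p (z₀.1, z₀.2) ^ α ≤ S z₀.2 :=
      Finset.single_le_sum (fun x _ => Real.rpow_nonneg (hp (x, z₀.2)) α)
        (Finset.mem_univ z₀.1)
    have h2 : 0 < p (z₀.1, z₀.2) ^ α := by
      rw [Prod.mk.eta]; exact Real.rpow_pos_of_pos hz₀ α
    linarith
  have hT0 : 0 < ∑ y, S y ^ (1/α) :=
    Finset.sum_pos' (fun y _ => Real.rpow_nonneg (hSnn y) _)
      ⟨z₀.2, Finset.mem_univ _, Real.rpow_pos_of_pos hSz _⟩
  set T : ℝ := ∑ y, S y ^ (1/α) with hTdef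
  have hM0 : 0 < ∑ x, pX x ^ α :=
    Finset.sum_pos (fun x _ => Real.rpow_pos_of_pos (hpXpos x) α) Finset.univ_nonempty
  set M : ℝ := ∑ x, pX x ^ α with hMdef
  -- the conditional supremum
  have hcond : sSup {v : ℝ | ∃ r : Y → X → ℝ,
          (∀ y x, 0 < r y x) ∧ (∀ y, (∑ x, r y x) = 1) ∧
          v = (∑ z : X × Y, p z * r z.2 z.1 ^ ((α - 1) / α)) ^ (α / (α - 1))}
      = T ^ (α / (α - 1)) := by
    set cset := {v : ℝ | ∃ r : Y → X → ℝ,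
          (∀ y x, 0 < r y x) ∧ (∀ y, (∑ x, r y x) = 1) ∧
          v = (∑ z : X × Y, p z * r z.2 z.1 ^ ((α - 1) / α)) ^ (α / (α - 1))} with hcset
    have hub : ∀ v ∈ cset, v ≤ T ^ (α / (α - 1)) := by
      rintro v ⟨r, hrpos, hr1, rfl⟩
      have hA_eq : (∑ z : X × Y, p z * r z.2 z.1 ^ ((α - 1) / α))
          = ∑ y, ∑ x, p (x, y) * r y x ^ ((α - 1) / α) :=
        Fintype.sum_prod_type_right _
      have hAnn : (0:ℝ) ≤ ∑ z : X × Y, p z * r z.2 z.1 ^ ((α - 1) / α) :=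
        Finset.sum_nonneg fun z _ =>
          mul_nonneg (hp z) (Real.rpow_nonneg (hrpos z.2 z.1).le _)
      rcases lt_or_gt_of_ne hα1 with hlt | hgt
      · have hTA : T ≤ ∑ z : X × Y, p z * r z.2 z.1 ^ ((α - 1) / α) := by
          rw [hA_eq, hTdef]
          exact Finset.sum_le_sum fun y _ =>
            core_lt hα0 hlt (fun x => p (x, y)) (r y)
              (fun x => hp (x, y)) (hrpos y) (hr1 y)
        exact Real.rpow_le_rpow_of_nonpos hT0 hTA
          (le_of_lt (div_neg_of_pos_of_neg hα0 (by linarith)))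
      · have hAT : (∑ z : X × Y, p z * r z.2 z.1 ^ ((α - 1) / α)) ≤ T := by
          rw [hA_eq, hTdef]
          exact Finset.sum_le_sum fun y _ =>
            core_gt hgt (fun x => p (x, y)) (r y)
              (fun x => hp (x, y)) (hrpos y) (hr1 y)
        exact Real.rpow_le_rpow hAnn hAT
          (le_of_lt (div_pos (by linarith) (by linarith)))
    -- approximating family
    set N : ℝ := (Fintype.card X : ℝ) with hNdef
    have hN0 : 0 < N := by
      rw [hNdef]
      exact_mod_cast Fintype.card_pos
    set rE : ℝ → Y → X → ℝ := fun ε y x => (p (x, y) ^ α + ε) / (S y + ε * N) with hrE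
    have hden : ∀ (ε : ℝ), 0 < ε → ∀ y, 0 < S y + ε * N := by
      intro ε hε y
      have := hSnn y
      nlinarith
    have hrEpos : ∀ (ε : ℝ), 0 < ε → ∀ y x, 0 < rE ε y x := by
      intro ε hε y x
      apply div_pos _ (hden ε hε y)
      have := Real.rpow_nonneg (hp (x, y)) α
      linarith
    have hrE1 : ∀ (ε : ℝ), 0 < ε → ∀ y, (∑ x, rE ε y x) = 1 := by
      intro ε hε y
      rw [hrE]
      simp only
      rw [← Finset.sum_div, Finset.sum_add_distrib, Finset.sum_const,
        Finset.card_univ, nsmul_eq_mul, hSdef]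
      simp only
      rw [div_eq_one_iff_eq (hden ε hε y).ne']
      rw [hSdef] at *
      ring
    set F : ℝ → ℝ := fun ε => ∑ z : X × Y, p z * rE ε z.2 z.1 ^ ((α - 1) / α) with hF
    have hmem : ∀ (ε : ℝ), 0 < ε → (F ε) ^ (α / (α - 1)) ∈ cset := by
      intro ε hε
      exact ⟨rE ε, hrEpos ε hε, hrE1 ε hε, rfl⟩
    have hFtend : Filter.Tendsto F (nhdsWithin 0 (Set.Ioi 0)) (nhds T) := by
      have hTsum : T = ∑ z : X × Y, p z * (p z ^ α / S z.2) ^ ((α - 1) / α) := by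
        rw [hTdef, Fintype.sum_prod_type_right]
        apply Finset.sum_congr rfl
        intro y _
        rw [← opt_value hα0 (fun x => p (x, y)) (fun x => hp (x, y))]
      rw [hTsum, hF]
      apply tendsto_finset_sum
      intro z _
      rcases eq_or_lt_of_le (hp z) with h0 | h0
      · have hz : (fun ε => p z * rE ε z.2 z.1 ^ ((α - 1) / α)) = fun _ => (0:ℝ) := by
          funext ε; rw [← h0, zero_mul]
        rw [hz, ← h0, zero_mul]
        exact tendsto_const_nhds
      · have hSz2 : 0 < S z.2 := by
          have h1 : p (z.1, z.2) ^ α ≤ S z.2 :=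
            Finset.single_le_sum (fun x _ => Real.rpow_nonneg (hp (x, z.2)) α)
              (Finset.mem_univ z.1)
          have h2 : 0 < p (z.1, z.2) ^ α := by
            rw [Prod.mk.eta]; exact Real.rpow_pos_of_pos h0 α
          linarith
        have hnum : Filter.Tendsto (fun ε : ℝ => p (z.1, z.2) ^ α + ε)
            (nhdsWithin 0 (Set.Ioi 0)) (nhds (p z ^ α)) := by
          have : Filter.Tendsto (fun ε : ℝ => p (z.1, z.2) ^ α + ε)
              (nhds 0) (nhds (p (z.1, z.2) ^ α + 0)) :=
            (tendsto_const_nhds.add Filter.tendsto_id)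
          rw [add_zero, Prod.mk.eta] at this
          exact this.mono_left nhdsWithin_le_nhds
        have hden' : Filter.Tendsto (fun ε : ℝ => S z.2 + ε * N)
            (nhdsWithin 0 (Set.Ioi 0)) (nhds (S z.2)) := by
          have : Filter.Tendsto (fun ε : ℝ => S z.2 + ε * N)
              (nhds 0) (nhds (S z.2 + 0 * N)) :=
            (tendsto_const_nhds.add (Filter.tendsto_id.mul tendsto_const_nhds))
          rw [zero_mul, add_zero] at this
          exact this.mono_left nhdsWithin_le_nhds
        have hbase : Filter.Tendsto (fun ε : ℝ => rE ε z.2 z.1)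
            (nhdsWithin 0 (Set.Ioi 0)) (nhds (p z ^ α / S z.2)) := by
          rw [hrE]
          exact hnum.div hden' hSz2.ne'
        have hbpos : (0:ℝ) < p z ^ α / S z.2 :=
          div_pos (Real.rpow_pos_of_pos h0 α) hSz2
        exact tendsto_const_nhds.mul
          (hbase.rpow_const (Or.inl hbpos.ne'))
    have hvtend : Filter.Tendsto (fun ε => (F ε) ^ (α / (α - 1)))
        (nhdsWithin 0 (Set.Ioi 0)) (nhds (T ^ (α / (α - 1)))) :=
      hFtend.rpow_const (Or.inl hT0.ne')
    have hlub : IsLUB cset (T ^ (α / (α - 1))) := by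
      constructor
      · exact hub
      · intro b hb
        refine le_of_tendsto hvtend ?_
        filter_upwards [self_mem_nhdsWithin] with ε hε
        exact hb (hmem ε hε)
    exact hlub.csSup_eq ⟨_, hmem 1 one_pos⟩
  -- the prior supremum
  have hprior : sSup {v : ℝ | ∃ r₀ : X → ℝ,
          (∀ x, 0 < r₀ x) ∧ (∑ x, r₀ x) = 1 ∧
          v = (∑ x, pX x * r₀ x ^ ((α - 1) / α)) ^ (α / (α - 1))}
      = (M ^ (1/α)) ^ (α / (α - 1)) := by
    apply IsGreatest.csSup_eq
    constructor
    · refine ⟨fun x => pX x ^ α / M, ?_, ?_, ?_⟩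
      · intro x
        exact div_pos (Real.rpow_pos_of_pos (hpXpos x) α) hM0
      · rw [← Finset.sum_div, ← hMdef, div_self hM0.ne']
      · congr 1
        rw [← opt_value hα0 pX (fun x => (hpXpos x).le), hMdef]
    · rintro v ⟨r₀, hr₀pos, hr₀1, rfl⟩
      have hBnn : (0:ℝ) ≤ ∑ x, pX x * r₀ x ^ ((α - 1) / α) :=
        Finset.sum_nonneg fun x _ =>
          mul_nonneg (hpXpos x).le (Real.rpow_nonneg (hr₀pos x).le _)
      rcases lt_or_gt_of_ne hα1 with hlt | hgt
      · have h := core_lt hα0 hlt pX r₀ (fun x => (hpXpos x).le) hr₀pos hr₀1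
        rw [← hMdef] at h
        exact Real.rpow_le_rpow_of_nonpos (Real.rpow_pos_of_pos hM0 _) h
          (le_of_lt (div_neg_of_pos_of_neg hα0 (by linarith)))
      · have h := core_gt hgt pX r₀ (fun x => (hpXpos x).le) hr₀pos hr₀1
        rw [← hMdef] at h
        exact Real.rpow_le_rpow hBnn h
          (le_of_lt (div_pos (by linarith) (by linarith)))
  rw [hcond, hprior]
  rw [Real.log_rpow hT0, Real.log_rpow (Real.rpow_pos_of_pos hM0 _),
    Real.log_rpow hM0]
  have h1α : (1:ℝ) - α ≠ 0 := fun h => hα1 (by linarith [sub_eq_zero.1 h])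
  field_simp
  ring
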